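/- Let (β_1, H_1), (β_2, H_2) ∈ (0,∞) × (0,1), and consider the 6×6 matrix M' with rows indexed by i=1,…,6 given by M'_{i,(3j−2,3j−1,3j)} = γ_i^{β_j H_j} λ_i^{β_j} (1, log₂ γ_i, log₂ λ_i) for j = 1,2, with (γ_1,…,γ_6) = (1,2,2,4,8,8) and (λ_1,…,λ_6) = (1,1,2,1,1,2). Then det M' = −2^{β_1 + β_2 + 2H_1β_1 + 2H_2β_2} (2^{H_1β_1} − 2^{H_2β_2})^5 (2^{H_1β_1} + 2^{H_2β_2}); in particular M' is regular if and only if H_1β_1 ≠ H_2β_2. -/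

import Mathlib

open Real

set_option maxRecDepth 8000
set_option maxHeartbeats 2000000

lemma key_det (a b c d : ℝ) :
    (Matrix.of ![![1,0,0,1,0,0], ![a,a,0,c,c,0],
      ![a*b,a*b,a*b,c*d,c*d,c*d], ![a*a,2*(a*a),0,c*c,2*(c*c),0],
      ![a*a*a,3*(a*a*a),0,c*c*c,3*(c*c*c),0],
      ![a*a*a*b,3*(a*a*a*b),a*a*a*b,c*c*c*d,3*(c*c*c*d),c*c*c*d]]).det
    = -(b * d * (a*a) * (c*c) * (a - c)^5 * (a + c)) := by
  simp [Matrix.det_succ_row_zero, Fin.sum_univ_succ, Fin.succAbove,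
    Fin.castSucc, Fin.castAdd, Fin.castLE]
  ring

lemma rpow4 (x : ℝ) : (4:ℝ) ^ x = (2:ℝ) ^ x * (2:ℝ) ^ x := by
  rw [show (4:ℝ) = 2 * 2 by norm_num, Real.mul_rpow (by norm_num) (by norm_num)]

lemma rpow8 (x : ℝ) : (8:ℝ) ^ x = (2:ℝ) ^ x * (2:ℝ) ^ x * (2:ℝ) ^ x := by
  rw [show (8:ℝ) = 2 * 4 by norm_num, Real.mul_rpow (by norm_num) (by norm_num), rpow4]
  ring

lemma logb24 : logb 2 4 = 2 := by
  rw [show (4:ℝ) = 2 ^ (2:ℝ) by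
    rw [show (2:ℝ) ^ (2:ℝ) = 2 ^ (2:ℕ) by rw [← Real.rpow_natCast]; norm_num]; norm_num]
  exact Real.logb_rpow (by norm_num) (by norm_num)

lemma logb28 : logb 2 8 = 3 := by
  rw [show (8:ℝ) = 2 ^ (3:ℝ) by
    rw [show (2:ℝ) ^ (3:ℝ) = 2 ^ (3:ℕ) by rw [← Real.rpow_natCast]; norm_num]; norm_num]
  exact Real.logb_rpow (by norm_num) (by norm_num)

lemma cons_val_five {α : Type*} {m : ℕ} (x : α) (u : Fin (m + 5) → α) :
    Matrix.vecCons x u 5 = u 4 := rfl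

lemma two_rpow_inj {x y : ℝ} : (2:ℝ) ^ x = 2 ^ y ↔ x = y := by
  constructor
  · intro h
    have := congrArg (logb 2) h
    rwa [Real.logb_rpow (by norm_num) (by norm_num),
      Real.logb_rpow (by norm_num) (by norm_num)] at this
  · rintro rfl; rfl

/-- For the design `(γ₁,…,γ₆) = (1,2,2,4,8,8)` and
`(λ₁,…,λ₆) = (1,1,2,1,1,2)`, the 6×6 matrix with rows
`γᵢ^{β_j H_j} λᵢ^{β_j} (1, log₂ γᵢ, log₂ λᵢ)`, `j = 1,2`, has determinant
`−2^{β₁+β₂+2H₁β₁+2H₂β₂} (2^{H₁β₁} − 2^{H₂β₂})⁵ (2^{H₁β₁} + 2^{H₂β₂})`;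
in particular it is regular iff `H₁β₁ ≠ H₂β₂`. -/
theorem stmt12 (β₁ β₂ H₁ H₂ : ℝ) (hβ₁ : 0 < β₁) (hβ₂ : 0 < β₂)
    (hH₁ : H₁ ∈ Set.Ioo (0:ℝ) 1) (hH₂ : H₂ ∈ Set.Ioo (0:ℝ) 1)
    (γ lam : Fin 6 → ℝ) (hγ : γ = ![1, 2, 2, 4, 8, 8]) (hlam : lam = ![1, 1, 2, 1, 1, 2])
    (M : Matrix (Fin 6) (Fin 6) ℝ)
    (hM : M = Matrix.of fun i =>
      ![γ i ^ (β₁ * H₁) * lam i ^ β₁,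
        γ i ^ (β₁ * H₁) * lam i ^ β₁ * logb 2 (γ i),
        γ i ^ (β₁ * H₁) * lam i ^ β₁ * logb 2 (lam i),
        γ i ^ (β₂ * H₂) * lam i ^ β₂,
        γ i ^ (β₂ * H₂) * lam i ^ β₂ * logb 2 (γ i),
        γ i ^ (β₂ * H₂) * lam i ^ β₂ * logb 2 (lam i)]) :
    M.det = -(2 ^ (β₁ + β₂ + 2 * H₁ * β₁ + 2 * H₂ * β₂)
        * ((2:ℝ) ^ (H₁ * β₁) - 2 ^ (H₂ * β₂)) ^ 5
        * ((2:ℝ) ^ (H₁ * β₁) + 2 ^ (H₂ * β₂)))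
      ∧ (IsUnit M ↔ H₁ * β₁ ≠ H₂ * β₂) := by
  set a : ℝ := 2 ^ (H₁ * β₁) with ha
  set b : ℝ := 2 ^ β₁ with hb
  set c : ℝ := 2 ^ (H₂ * β₂) with hc
  set d : ℝ := 2 ^ β₂ with hd
  have hM' : M = Matrix.of ![![1,0,0,1,0,0], ![a,a,0,c,c,0],
      ![a*b,a*b,a*b,c*d,c*d,c*d], ![a*a,2*(a*a),0,c*c,2*(c*c),0],
      ![a*a*a,3*(a*a*a),0,c*c*c,3*(c*c*c),0],
      ![a*a*a*b,3*(a*a*a*b),a*a*a*b,c*c*c*d,3*(c*c*c*d),c*c*c*d]] := by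
    subst hγ hlam hM
    ext i j
    fin_cases i <;> fin_cases j <;>
      simp [ha, hb, hc, hd, Real.one_rpow, Real.logb_one, rpow4, rpow8, logb24, logb28,
        Real.logb_self_eq_one (by norm_num : (1:ℝ) < 2), mul_comm β₁ H₁, mul_comm β₂ H₂,
        cons_val_five] <;>
      ring
  have hdet : M.det = -(b * d * (a*a) * (c*c) * (a - c)^5 * (a + c)) := by
    rw [hM', key_det]
  have hrw : (2:ℝ) ^ (β₁ + β₂ + 2 * H₁ * β₁ + 2 * H₂ * β₂) = b * d * (a*a) * (c*c) := by
    rw [show β₁ + β₂ + 2 * H₁ * β₁ + 2 * H₂ * β₂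
        = β₁ + (β₂ + ((H₁ * β₁ + H₁ * β₁) + (H₂ * β₂ + H₂ * β₂))) by ring,
      Real.rpow_add two_pos, Real.rpow_add two_pos, Real.rpow_add two_pos,
      Real.rpow_add two_pos, Real.rpow_add two_pos, hb, hd, ha, hc]
    ring
  refine ⟨by rw [hdet, hrw], ?_⟩
  rw [Matrix.isUnit_iff_isUnit_det, isUnit_iff_ne_zero, hdet]
  have hapos : (0:ℝ) < a := Real.rpow_pos_of_pos two_pos _
  have hcpos : (0:ℝ) < c := Real.rpow_pos_of_pos two_pos _
  have hbpos : (0:ℝ) < b := Real.rpow_pos_of_pos two_pos _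
  have hdpos : (0:ℝ) < d := Real.rpow_pos_of_pos two_pos _
  have heq : -(b * d * (a*a) * (c*c) * (a - c)^5 * (a + c)) = 0 ↔ H₁ * β₁ = H₂ * β₂ := by
    have hac : (0:ℝ) < a + c := by positivity
    rw [neg_eq_zero]
    simp only [mul_eq_zero, pow_eq_zero_iff (Nat.succ_ne_zero 4), sub_eq_zero,
      hapos.ne', hcpos.ne', hbpos.ne', hdpos.ne', hac.ne', or_false, false_or]
    rw [ha, hc]
    exact two_rpow_inj
  exact not_congr heq
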